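/- Let F be an m-dimensional normed space and x_1, ..., x_n vectors in F. Then the supremum over all sign choices θ_j ∈ {−1, +1} of ‖∑_j θ_j x_j‖ is at least (1/m) ∑_j ‖x_j‖. -/

import Mathlib

/-- For an `m`-dimensional normed space `F` and vectors `x_1, …, x_n` in `F`,
the supremum over sign choices `θ_j = ±1` of `‖∑ θ_j x_j‖` is at least
`(1/m) ∑ ‖x_j‖`. (The supremum over the finite set of sign choices is attained,
so we state it as the existence of a sign choice.) -/
theorem stmt_0 (F : Type*) [NormedAddCommGroup F] [NormedSpace ℝ F]
    [FiniteDimensional ℝ F] (m : ℕ) (hm : Module.finrank ℝ F = m) (hm0 : 0 < m)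
    (n : ℕ) (x : Fin n → F) :
    ∃ θ : Fin n → ℝ, (∀ j, θ j = 1 ∨ θ j = -1) ∧
      (1 / (m : ℝ)) * ∑ j, ‖x j‖ ≤ ‖∑ j, θ j • x j‖ := by
  classical
  let b : Module.Basis (Fin m) ℝ F := (Module.finBasis ℝ F).reindex (finCongr hm)
  let D : AlternatingMap ℝ F ℝ (Fin m) := b.det
  have hDcont : Continuous fun v : Fin m → F => D v := by
    have h1 : (fun v : Fin m → F => D v) = fun v => (b.toMatrix v).det := by
      funext v; exact b.det_apply v
    rw [h1]
    apply Continuous.matrix_det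
    apply continuous_pi; intro i; apply continuous_pi; intro j
    exact ((b.coord i).continuous_of_finiteDimensional).comp (continuous_apply j)
  let K : Set (Fin m → F) := Set.pi Set.univ fun _ => Metric.closedBall (0 : F) 1
  have hK : IsCompact K := isCompact_univ_pi fun _ => isCompact_closedBall 0 1
  -- a nonzero point of K
  let w₀ : Fin m → F := fun i => ‖b i‖⁻¹ • b i
  have hbne : ∀ i, ‖b i‖ ≠ 0 := fun i => norm_ne_zero_iff.mpr (b.ne_zero i)
  have hw₀K : w₀ ∈ K := by
    intro i _
    simp only [w₀, Metric.mem_closedBall, dist_zero_right, norm_smul, norm_inv, norm_norm]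
    rw [inv_mul_cancel₀ (hbne i)]
  have hDw₀ : D w₀ ≠ 0 := by
    have : D w₀ = (∏ i, ‖b i‖⁻¹) • D b := D.toMultilinearMap.map_smul_univ _ _
    rw [this, Module.Basis.det_self]
    simp only [smul_eq_mul, mul_one]
    exact Finset.prod_ne_zero_iff.mpr fun i _ => inv_ne_zero (hbne i)
  obtain ⟨v, hvK, hvmax'⟩ :=
    hK.exists_isMaxOn ⟨w₀, hw₀K⟩ ((continuous_abs.comp hDcont).continuousOn)
  have hvmax : ∀ w ∈ K, |D w| ≤ |D v| := fun w hw => hvmax' hw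
  have hDv : 0 < |D v| := lt_of_lt_of_le (abs_pos.mpr hDw₀) (hvmax w₀ hw₀K)
  have hvle : ∀ i, ‖v i‖ ≤ 1 := by
    intro i
    have := hvK i (Set.mem_univ i)
    simpa [Metric.mem_closedBall, dist_zero_right] using this
  -- the key bound on the dual functionals
  have hkey : ∀ (i : Fin m) (y : F), |D (Function.update v i y)| ≤ ‖y‖ * |D v| := by
    intro i y
    rcases eq_or_ne y 0 with rfl | hy
    · rw [AlternatingMap.map_update_zero]
      simp [mul_nonneg (norm_nonneg _) (abs_nonneg _)]
    · have hny : ‖y‖ ≠ 0 := norm_ne_zero_iff.mpr hy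
      have h1 : Function.update v i y = Function.update v i (‖y‖ • (‖y‖⁻¹ • y)) := by
        rw [smul_smul, mul_inv_cancel₀ hny, one_smul]
      have h2 : D (Function.update v i y) = ‖y‖ * D (Function.update v i (‖y‖⁻¹ • y)) := by
        rw [h1, AlternatingMap.map_update_smul]; rfl
      have hmem : Function.update v i (‖y‖⁻¹ • y) ∈ K := by
        intro k _
        simp only [Metric.mem_closedBall, dist_zero_right]
        rcases eq_or_ne k i with rfl | hk
        · rw [Function.update_self, norm_smul, norm_inv, norm_norm, inv_mul_cancel₀ hny]
        · rw [Function.update_of_ne hk]; exact hvle k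
      calc |D (Function.update v i y)| = ‖y‖ * |D (Function.update v i (‖y‖⁻¹ • y))| := by
            rw [h2, abs_mul, abs_of_nonneg (norm_nonneg y)]
        _ ≤ ‖y‖ * |D v| := by
            exact mul_le_mul_of_nonneg_left (hvmax _ hmem) (norm_nonneg y)
  -- the dual functionals
  let L : Fin m → F →ₗ[ℝ] ℝ := fun i => D.toMultilinearMap.toLinearMap v i
  have hL : ∀ i y, L i y = D (Function.update v i y) := fun i y => rfl
  -- v is a basis
  have hbasis : LinearIndependent ℝ v ∧ Submodule.span ℝ (Set.range v) = ⊤ :=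
    ((Module.Basis.is_basis_iff_det b).mpr (isUnit_iff_ne_zero.mpr (fun h => by simp [D, h] at hDv)))
  let v' : Module.Basis (Fin m) ℝ F := Module.Basis.mk hbasis.1 hbasis.2.ge
  have hv' : ∀ i, v' i = v i := fun i => Module.Basis.mk_apply _ _ i
  -- representation : ∀ y, (D v) • y = ∑ i, L i y • v i
  have hrep : ∀ y : F, (D v) • y = ∑ i, L i y • v i := by
    have : (D v) • (LinearMap.id : F →ₗ[ℝ] F) = ∑ i, (L i).smulRight (v i) := by
      apply v'.ext
      intro j
      simp only [LinearMap.smul_apply, LinearMap.id_apply, LinearMap.sum_apply,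
        LinearMap.smulRight_apply, hv']
      rw [Finset.sum_eq_single j]
      · rw [hL, Function.update_eq_self]
      · intro i _ hij
        rw [hL]
        have : D (Function.update v i (v j)) = 0 := by
          apply D.map_eq_zero_of_eq _ (i := i) (j := j) _ hij
          rw [Function.update_self, Function.update_of_ne (Ne.symm hij)]
        rw [this, zero_smul]
      · intro h; exact absurd (Finset.mem_univ j) h
    intro y
    have h3 := LinearMap.congr_fun this y
    simpa using h3
  -- norm bound from representation
  have hnorm : ∀ y : F, ‖y‖ * |D v| ≤ ∑ i, |L i y| := by
    intro y
    have h1 : ‖(D v) • y‖ ≤ ∑ i, |L i y| := by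
      rw [hrep y]
      refine le_trans (norm_sum_le _ _) (Finset.sum_le_sum fun i _ => ?_)
      rw [norm_smul]
      calc ‖L i y‖ * ‖v i‖ ≤ ‖L i y‖ * 1 :=
            mul_le_mul_of_nonneg_left (hvle i) (norm_nonneg _)
        _ = |L i y| := by rw [mul_one]; exact Real.norm_eq_abs _
    calc ‖y‖ * |D v| = ‖(D v) • y‖ := by
          rw [norm_smul, Real.norm_eq_abs, mul_comm]
      _ ≤ ∑ i, |L i y| := h1
  -- pick the best coordinate
  have havg : ∑ j, ‖x j‖ * |D v| ≤ ∑ i : Fin m, ∑ j, |L i (x j)| := by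
    rw [Finset.sum_comm]
    exact Finset.sum_le_sum fun j _ => hnorm (x j)
  obtain ⟨i₀, _, hi₀⟩ : ∃ i ∈ Finset.univ,
      (1 / (m : ℝ)) * ∑ j, ‖x j‖ * |D v| ≤ ∑ j, |L i (x j)| := by
    apply Finset.exists_le_of_sum_le ⟨⟨0, hm0⟩, Finset.mem_univ _⟩
    rw [Finset.sum_const, Finset.card_univ, Fintype.card_fin, nsmul_eq_mul]
    calc (m : ℝ) * ((1 / (m : ℝ)) * ∑ j, ‖x j‖ * |D v|) = ∑ j, ‖x j‖ * |D v| := by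
          rw [← mul_assoc, mul_one_div, div_self (Nat.cast_ne_zero.mpr hm0.ne'), one_mul]
      _ ≤ _ := havg
  refine ⟨fun j => if 0 ≤ L i₀ (x j) then 1 else -1, fun j => by by_cases h : 0 ≤ L i₀ (x j) <;> simp [h], ?_⟩
  set θ : Fin n → ℝ := fun j => if 0 ≤ L i₀ (x j) then 1 else -1 with hθ
  have hsum : L i₀ (∑ j, θ j • x j) = ∑ j, |L i₀ (x j)| := by
    rw [map_sum]
    congr 1; funext j
    rw [map_smul, smul_eq_mul, hθ]
    by_cases h : 0 ≤ L i₀ (x j)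
    · simp [h, abs_of_nonneg h]
    · simp [h, abs_of_neg (lt_of_not_ge h)]
  have hfinal : ∑ j, |L i₀ (x j)| ≤ ‖∑ j, θ j • x j‖ * |D v| := by
    rw [← hsum]
    calc L i₀ (∑ j, θ j • x j) ≤ |L i₀ (∑ j, θ j • x j)| := le_abs_self _
      _ = |D (Function.update v i₀ (∑ j, θ j • x j))| := by rw [hL]
      _ ≤ ‖∑ j, θ j • x j‖ * |D v| := hkey i₀ _
  have h2 : (1 / (m : ℝ)) * (∑ j, ‖x j‖) * |D v| ≤ ‖∑ j, θ j • x j‖ * |D v| := by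
    calc (1 / (m : ℝ)) * (∑ j, ‖x j‖) * |D v|
        = (1 / (m : ℝ)) * ∑ j, ‖x j‖ * |D v| := by
          rw [mul_assoc, Finset.sum_mul]
      _ ≤ ∑ j, |L i₀ (x j)| := hi₀
      _ ≤ ‖∑ j, θ j • x j‖ * |D v| := hfinal
  exact le_of_mul_le_mul_right h2 hDv
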